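/- Let b, c be real numbers. Define the aerated Catalan numbers C₀₁ : ℕ → ℕ by C₀₁(μ) = Catalan(μ/2) if μ is even and C₀₁(μ) = 0 if μ is odd, where Catalan(k) is the k-th Catalan number, and define the (0,1)-bc-Motzkin numbers by M̃₀₁(n;b,c) = Σ_{μ=0}^{n} binom(n,μ)·C₀₁(μ)·b^{n−μ}·c^{μ}. Let G ∈ ℝ[[z]] be the formal power series whose n-th coefficient is M̃₀₁(n;b,c). Then G satisfies the quadratic equation G = 1 + b·z·G + c²·z²·G², equivalently c²·z²·G² + (b·z − 1)·G + 1 = 0, as an identity of formal power series. -/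

import Mathlib

/-- The aerated Catalan numbers: `C₀₁(μ) = Catalan(μ/2)` if `μ` is even, `0` if odd. -/
def aeratedCatalan (μ : ℕ) : ℕ := if Even μ then catalan (μ / 2) else 0

/-- The `(0,1)`-`bc`-Motzkin numbers:
`M̃₀₁(n; b, c) = ∑_{μ=0}^{n} binom(n,μ) · C₀₁(μ) · b^{n−μ} · c^{μ}`. -/
noncomputable def bcMotzkin01 (b c : ℝ) (n : ℕ) : ℝ :=
  ∑ μ ∈ Finset.range (n + 1),
    (Nat.choose n μ : ℝ) * (aeratedCatalan μ : ℝ) * b ^ (n - μ) * c ^ μ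

/-- The generating function of the `(0,1)`-`bc`-Motzkin numbers: the formal power
series over `ℝ` whose `n`-th coefficient is `M̃₀₁(n;b,c)`. -/
noncomputable def bcMotzkinGF (b c : ℝ) : PowerSeries ℝ :=
  PowerSeries.mk (fun n => bcMotzkin01 b c n)

open Finset

lemma aerated_zero : aeratedCatalan 0 = 1 := by simp [aeratedCatalan]

lemma aerated_one : aeratedCatalan 1 = 0 := by simp [aeratedCatalan]


lemma hockey (m ν : ℕ) : ∑ j ∈ range (m+1), Nat.choose j ν = Nat.choose (m+1) (ν+1) := by
  rw [← Nat.sum_Icc_choose m ν]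
  apply (Finset.sum_subset ?_ ?_).symm
  · intro x hx; simp only [mem_Icc] at hx; simp only [mem_range]; omega
  · intro x hx hnx
    simp only [mem_range] at hx; simp only [mem_Icc, not_and, not_le] at hnx
    exact Nat.choose_eq_zero_of_lt (by omega)

lemma vandermonde_aux : ∀ μ m ν : ℕ,
    ∑ k ∈ range (m+1), Nat.choose k μ * Nat.choose (m-k) ν = Nat.choose (m+1) (μ+ν+1) := by
  intro μ
  induction μ with
  | zero =>
    intro m ν
    simp only [Nat.choose_zero_right, one_mul, Nat.zero_add]
    have h := Finset.sum_range_reflect (fun k => Nat.choose k ν) (m+1)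
    simp only [Nat.add_sub_cancel] at h
    rw [h]
    exact hockey m ν
  | succ μ ih =>
    intro m ν
    induction m with
    | zero =>
      simp [Nat.choose_eq_zero_of_lt (show 0 < μ + 1 by omega),
        Nat.choose_eq_zero_of_lt (show 1 < μ + 1 + ν + 1 by omega)]
    | succ m ihm =>
      rw [Finset.sum_range_succ']
      have h1 : ∀ j, m + 1 - (j+1) = m - j := fun j => by omega
      simp only [h1, Nat.choose_succ_succ' _ μ, Nat.add_mul, Finset.sum_add_distrib,
        Nat.choose_zero_succ, Nat.zero_mul, Nat.add_zero]
      rw [ih m ν, ihm]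
      have h2 : μ + 1 + ν + 1 = (μ + ν + 1) + 1 := by omega
      rw [h2]
      exact (Nat.choose_succ_succ' (m+1) (μ+ν+1)).symm



lemma aerated_two_mul (a : ℕ) : aeratedCatalan (2*a) = catalan a := by
  unfold aeratedCatalan
  rw [if_pos ⟨a, two_mul a⟩]
  congr 1
  omega

lemma aerated_odd {μ : ℕ} (h : ¬ Even μ) : aeratedCatalan μ = 0 := by
  unfold aeratedCatalan; rw [if_neg h]

lemma sum_even_support (f : ℕ → ℕ) (hf : ∀ μ, ¬ Even μ → f μ = 0) :
    ∀ t, ∑ μ ∈ range (2*t+1), f μ = ∑ a ∈ range (t+1), f (2*a) := by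
  intro t
  induction t with
  | zero => simp
  | succ t ih =>
    have h : 2*(t+1)+1 = (2*t+1) + 1 + 1 := by omega
    rw [h, Finset.sum_range_succ, Finset.sum_range_succ, ih,
      hf (2*t+1) (by simp [Nat.even_add_one, parity_simps])]
    have h2 : 2*t+1+1 = 2*(t+1) := by omega
    rw [h2, Nat.add_zero,
      Finset.sum_range_succ (fun a => f (2*a)) (t+1), Finset.sum_range_succ (fun a => f (2*a)) t]

lemma catalan_range (t : ℕ) :
    ∑ k ∈ range (t+1), catalan k * catalan (t - k) = catalan (t+1) := by
  rw [catalan_succ']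
  exact (Finset.Nat.sum_antidiagonal_eq_sum_range_succ (fun x y => catalan x * catalan y) t).symm

lemma aerated_conv (s : ℕ) :
    ∑ μ ∈ range (s+1), aeratedCatalan μ * aeratedCatalan (s - μ) = aeratedCatalan (s+2) := by
  rcases Nat.even_or_odd s with ⟨t, ht⟩ | hodd
  · have hs : s = 2*t := by omega
    subst hs
    rw [sum_even_support _ (fun μ hμ => by rw [aerated_odd hμ, Nat.zero_mul]) t]
    have : ∀ a ∈ range (t+1), aeratedCatalan (2*a) * aeratedCatalan (2*t - 2*a)
        = catalan a * catalan (t - a) := by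
      intro a ha
      simp only [mem_range] at ha
      have h2 : 2*t - 2*a = 2*(t-a) := by omega
      rw [h2, aerated_two_mul, aerated_two_mul]
    rw [Finset.sum_congr rfl this, catalan_range]
    have h3 : 2*t+2 = 2*(t+1) := by omega
    rw [h3, aerated_two_mul]
  · rw [aerated_odd (by
      rw [Nat.even_add]
      simp [Nat.not_even_iff_odd.mpr hodd])]
    apply Finset.sum_eq_zero
    intro μ hμ
    simp only [mem_range] at hμ
    by_cases he : Even μ
    · have : ¬ Even (s - μ) := by
        rw [Nat.even_sub (by omega)]
        simp [he, Nat.not_even_iff_odd.mpr hodd]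
      rw [aerated_odd this, Nat.mul_zero]
    · rw [aerated_odd he, Nat.zero_mul]

lemma conv_closed (b c : ℝ) (m : ℕ) :
    ∑ k ∈ range (m+1), bcMotzkin01 b c k * bcMotzkin01 b c (m-k)
      = ∑ s ∈ range (m+1),
          ((m+1).choose (s+1) : ℝ) * (aeratedCatalan (s+2) : ℝ) * b ^ (m-s) * c ^ s := by
  have hg : ∀ i, i ≤ m → bcMotzkin01 b c i
      = ∑ μ ∈ range (m+1), (Nat.choose i μ : ℝ) * (aeratedCatalan μ : ℝ) * b ^ (i-μ) * c ^ μ := by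
    intro i hi
    unfold bcMotzkin01
    apply Finset.sum_subset
    · intro x hx; simp only [mem_range] at *; omega
    · intro x hx hnx
      simp only [mem_range] at hx hnx
      rw [Nat.choose_eq_zero_of_lt (by omega)]
      simp
  calc
    ∑ k ∈ range (m+1), bcMotzkin01 b c k * bcMotzkin01 b c (m-k)
      = ∑ k ∈ range (m+1), ∑ μ ∈ range (m+1), ∑ ν ∈ range (m+1),
          ((Nat.choose k μ * Nat.choose (m-k) ν : ℕ) : ℝ)
            * (((aeratedCatalan μ * aeratedCatalan ν : ℕ) : ℝ) * (b ^ (m-(μ+ν)) * c ^ (μ+ν))) := by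
        refine Finset.sum_congr rfl fun k hk => ?_
        simp only [mem_range] at hk
        rw [hg k (by omega), hg (m-k) (by omega), Finset.sum_mul_sum]
        refine Finset.sum_congr rfl fun μ hμ => Finset.sum_congr rfl fun ν hν => ?_
        by_cases h : μ ≤ k ∧ ν ≤ m - k
        · have e1 : (k-μ) + ((m-k)-ν) = m - (μ+ν) := by omega
          rw [← e1, pow_add, pow_add c μ ν]
          push_cast
          ring
        · rcases not_and_or.mp h with h1 | h1
          · rw [Nat.choose_eq_zero_of_lt (by omega : k < μ)]
            push_cast
            ring
          · rw [Nat.choose_eq_zero_of_lt (by omega : m - k < ν)]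
            push_cast
            ring
    _ = ∑ μ ∈ range (m+1), ∑ ν ∈ range (m+1),
          ((m+1).choose (μ+ν+1) : ℝ)
            * (((aeratedCatalan μ * aeratedCatalan ν : ℕ) : ℝ) * (b ^ (m-(μ+ν)) * c ^ (μ+ν))) := by
        rw [Finset.sum_comm]
        refine Finset.sum_congr rfl fun μ _ => ?_
        rw [Finset.sum_comm]
        refine Finset.sum_congr rfl fun ν _ => ?_
        rw [← Finset.sum_mul, ← Nat.cast_sum, vandermonde_aux μ m ν]
    _ = ∑ p ∈ range (m+1) ×ˢ range (m+1),
          ((m+1).choose (p.1+p.2+1) : ℝ)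
            * (((aeratedCatalan p.1 * aeratedCatalan p.2 : ℕ) : ℝ) * (b ^ (m-(p.1+p.2)) * c ^ (p.1+p.2))) := by
        rw [Finset.sum_product]
    _ = ∑ p ∈ (range (m+1)).biUnion Finset.HasAntidiagonal.antidiagonal,
          ((m+1).choose (p.1+p.2+1) : ℝ)
            * (((aeratedCatalan p.1 * aeratedCatalan p.2 : ℕ) : ℝ) * (b ^ (m-(p.1+p.2)) * c ^ (p.1+p.2))) := by
        refine (Finset.sum_subset ?_ ?_).symm
        · intro p hp
          simp only [Finset.mem_biUnion, mem_range, Finset.HasAntidiagonal.mem_antidiagonal] at hp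
          obtain ⟨s, hs, hps⟩ := hp
          simp only [Finset.mem_product, mem_range]
          omega
        · intro p hp hnp
          simp only [Finset.mem_biUnion, mem_range, Finset.HasAntidiagonal.mem_antidiagonal] at hnp
          push_neg at hnp
          have : m + 1 < p.1 + p.2 + 1 := by
            by_contra hcon
            exact absurd (hnp (p.1+p.2) (by omega)) (by simp)
          rw [Nat.choose_eq_zero_of_lt this]
          push_cast
          ring
    _ = ∑ s ∈ range (m+1), ∑ p ∈ Finset.HasAntidiagonal.antidiagonal s,
          ((m+1).choose (p.1+p.2+1) : ℝ)
            * (((aeratedCatalan p.1 * aeratedCatalan p.2 : ℕ) : ℝ) * (b ^ (m-(p.1+p.2)) * c ^ (p.1+p.2))) := by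
        apply Finset.sum_biUnion
        intro s hs t ht hst
        simp only [Finset.disjoint_left]
        intro p hp hq
        simp only [Finset.HasAntidiagonal.mem_antidiagonal] at hp hq
        exact hst (hp ▸ hq)
    _ = ∑ s ∈ range (m+1),
          ((m+1).choose (s+1) : ℝ) * (aeratedCatalan (s+2) : ℝ) * b ^ (m-s) * c ^ s := by
        refine Finset.sum_congr rfl fun s hs => ?_
        rw [Finset.Nat.sum_antidiagonal_eq_sum_range_succ_mk]
        have hpt : ∀ μ ∈ range (s+1),
            ((m+1).choose (μ+(s-μ)+1) : ℝ)
              * (((aeratedCatalan μ * aeratedCatalan (s-μ) : ℕ) : ℝ) * (b ^ (m-(μ+(s-μ))) * c ^ (μ+(s-μ))))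
            = (((m+1).choose (s+1) : ℝ) * (b ^ (m-s) * c ^ s))
                * ((aeratedCatalan μ * aeratedCatalan (s-μ) : ℕ) : ℝ) := by
          intro μ hμ
          simp only [mem_range] at hμ
          have h1 : μ + (s - μ) = s := by omega
          rw [h1]
          ring
        rw [Finset.sum_congr rfl hpt, ← Finset.mul_sum, ← Nat.cast_sum, aerated_conv s]
        ring

lemma key (b c : ℝ) (m : ℕ) :
    bcMotzkin01 b c (m+2) = b * bcMotzkin01 b c (m+1)
      + c^2 * ∑ k ∈ range (m+1), bcMotzkin01 b c k * bcMotzkin01 b c (m-k) := by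
  rw [conv_closed]
  have hL : bcMotzkin01 b c (m+2)
      = ((∑ ν ∈ range (m+1), ((m+1).choose (ν+1) : ℝ) * (aeratedCatalan (ν+1) : ℝ) * b^(m+1-ν) * c^(ν+1))
        + (∑ s ∈ range (m+1), ((m+1).choose (s+1) : ℝ) * (aeratedCatalan (s+2) : ℝ) * b^(m-s) * c^(s+2)))
        + b^(m+2) := by
    unfold bcMotzkin01
    rw [Finset.sum_range_succ']
    have hpt : ∀ ν ∈ range (m+2),
        ((m+2).choose (ν+1) : ℝ) * (aeratedCatalan (ν+1) : ℝ) * b^(m+2-(ν+1)) * c^(ν+1)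
        = ((m+1).choose (ν+1) : ℝ) * (aeratedCatalan (ν+1) : ℝ) * b^(m+1-ν) * c^(ν+1)
          + ((m+1).choose ν : ℝ) * (aeratedCatalan (ν+1) : ℝ) * b^(m+1-ν) * c^(ν+1) := by
      intro ν _
      have h1 : m+2-(ν+1) = m+1-ν := by omega
      rw [h1, Nat.choose_succ_succ' (m+1) ν]
      push_cast
      ring
    rw [Finset.sum_congr rfl hpt, Finset.sum_add_distrib]
    rw [Finset.sum_range_succ
        (fun ν => ((m+1).choose (ν+1) : ℝ) * (aeratedCatalan (ν+1) : ℝ) * b^(m+1-ν) * c^(ν+1)) (m+1)]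
    rw [Finset.sum_range_succ'
        (fun ν => ((m+1).choose ν : ℝ) * (aeratedCatalan (ν+1) : ℝ) * b^(m+1-ν) * c^(ν+1)) (m+1)]
    have hz1 : ((m+1).choose (m+1+1) : ℝ) = 0 := by
      rw [Nat.choose_eq_zero_of_lt (by omega)]; norm_num
    have hpt2 : ∀ s ∈ range (m+1),
        ((m+1).choose (s+1) : ℝ) * (aeratedCatalan (s+1+1) : ℝ) * b^(m+1-(s+1)) * c^(s+1+1)
        = ((m+1).choose (s+1) : ℝ) * (aeratedCatalan (s+2) : ℝ) * b^(m-s) * c^(s+2) := by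
      intro s _
      have h1 : m+1-(s+1) = m-s := by omega
      rw [h1]
    rw [Finset.sum_congr rfl hpt2]
    rw [hz1, aerated_one, aerated_zero, Nat.choose_zero_right, Nat.choose_zero_right (m+2)]
    push_cast
    ring
  have hR : b * bcMotzkin01 b c (m+1)
      + c^2 * ∑ s ∈ range (m+1), ((m+1).choose (s+1) : ℝ) * (aeratedCatalan (s+2) : ℝ) * b ^ (m-s) * c ^ s
      = ((∑ ν ∈ range (m+1), ((m+1).choose (ν+1) : ℝ) * (aeratedCatalan (ν+1) : ℝ) * b^(m+1-ν) * c^(ν+1))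
        + (∑ s ∈ range (m+1), ((m+1).choose (s+1) : ℝ) * (aeratedCatalan (s+2) : ℝ) * b^(m-s) * c^(s+2)))
        + b^(m+2) := by
    unfold bcMotzkin01
    rw [Finset.mul_sum, Finset.sum_range_succ']
    have h1 : ∀ ν ∈ range (m+1),
        b * (((m+1).choose (ν+1) : ℝ) * (aeratedCatalan (ν+1) : ℝ) * b^(m+1-(ν+1)) * c^(ν+1))
        = ((m+1).choose (ν+1) : ℝ) * (aeratedCatalan (ν+1) : ℝ) * b^(m+1-ν) * c^(ν+1) := by
      intro ν hν
      simp only [mem_range] at hν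
      have h2 : m+1-ν = (m+1-(ν+1))+1 := by omega
      rw [h2, pow_succ]
      ring
    rw [Finset.sum_congr rfl h1, Finset.mul_sum]
    have h3 : ∀ s ∈ range (m+1),
        c^2 * (((m+1).choose (s+1) : ℝ) * (aeratedCatalan (s+2) : ℝ) * b^(m-s) * c^s)
        = ((m+1).choose (s+1) : ℝ) * (aeratedCatalan (s+2) : ℝ) * b^(m-s) * c^(s+2) := by
      intro s _
      rw [pow_add c s 2]
      ring
    rw [Finset.sum_congr rfl h3, aerated_zero, Nat.choose_zero_right]
    push_cast
    ring
  rw [hL]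
  exact hR.symm

/-- The generating function `G` of the `(0,1)`-`bc`-Motzkin numbers satisfies the
quadratic equation `G = 1 + b·z·G + c²·z²·G²`, equivalently
`c²·z²·G² + (b·z − 1)·G + 1 = 0`, as an identity of formal power series. -/
theorem bcMotzkinGF_quadratic (b c : ℝ) :
    bcMotzkinGF b c
        = 1 + PowerSeries.C b * PowerSeries.X * bcMotzkinGF b c
            + PowerSeries.C (c ^ 2) * PowerSeries.X ^ 2 * (bcMotzkinGF b c) ^ 2
    ∧ PowerSeries.C (c ^ 2) * PowerSeries.X ^ 2 * (bcMotzkinGF b c) ^ 2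
        + (PowerSeries.C b * PowerSeries.X - 1) * bcMotzkinGF b c + 1 = 0 := by
  have main : bcMotzkinGF b c
      = 1 + PowerSeries.C b * PowerSeries.X * bcMotzkinGF b c
          + PowerSeries.C (c ^ 2) * PowerSeries.X ^ 2 * (bcMotzkinGF b c) ^ 2 := by
    have hrw : 1 + PowerSeries.C b * PowerSeries.X * bcMotzkinGF b c
          + PowerSeries.C (c ^ 2) * PowerSeries.X ^ 2 * (bcMotzkinGF b c) ^ 2
        = 1 + PowerSeries.C b * (PowerSeries.X ^ 1 * bcMotzkinGF b c)
          + PowerSeries.C (c ^ 2) * (PowerSeries.X ^ 2 * (bcMotzkinGF b c * bcMotzkinGF b c)) := by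
      ring
    rw [hrw]
    ext n
    rw [map_add, map_add, PowerSeries.coeff_one, PowerSeries.coeff_C_mul, PowerSeries.coeff_C_mul,
      PowerSeries.coeff_X_pow_mul', PowerSeries.coeff_X_pow_mul']
    match n with
    | 0 =>
      norm_num
      simp [bcMotzkinGF, bcMotzkin01, aerated_zero]
    | 1 =>
      norm_num
      simp [bcMotzkinGF, PowerSeries.coeff_mk, bcMotzkin01, Finset.sum_range_succ,
        aerated_zero, aerated_one]
    | (m+2) =>
      have h1 : (1 : ℕ) ≤ m + 2 := by omega
      have h2 : (2 : ℕ) ≤ m + 2 := by omega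
      rw [if_pos h1, if_pos h2, if_neg (by omega : ¬ (m + 2 = 0))]
      have e1 : m + 2 - 1 = m + 1 := by omega
      have e2 : m + 2 - 2 = m := by omega
      rw [e1, e2]
      simp only [bcMotzkinGF, PowerSeries.coeff_mk, PowerSeries.coeff_mul]
      rw [Finset.Nat.sum_antidiagonal_eq_sum_range_succ_mk]
      simp only [PowerSeries.coeff_mk]
      rw [key b c m]
      ring
  refine ⟨main, ?_⟩
  linear_combination -main
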